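/- Let k ∈ ω and let R be a meager k-ary relation on (2^ω)^ω. Then for each i < k there is a sequence ⟨C_n^i : n ∈ ω⟩ of perfect subsets of 2^ω such that no k-tuple (x_0, …, x_{k−1}) with x_i ∈ ∏_{n∈ω} C_n^i for each i < k belongs to R. -/

import Mathlib

namespace PolMyc

open Set Filter

abbrev X0 := ℕ → Bool
abbrev XX := ℕ → X0

/-- `y` extends the finite string `t`. -/
def Ext (t : List Bool) (y : X0) : Prop := ∀ i, i < t.length → y i = t.getD i false

def Cyl (u : ℕ → List Bool) (N : ℕ) : Set XX := {x | ∀ j, j < N → Ext (u j) (x j)}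

lemma Ext.mono {t t' : List Bool} (h : t <+: t') {y : X0} (hy : Ext t' y) : Ext t y := by
  intro i hi
  have hi' : i < t'.length := lt_of_lt_of_le hi h.length_le
  rw [hy i hi', List.getD_eq_getElem _ _ hi', List.getD_eq_getElem _ _ hi]
  exact (List.IsPrefix.getElem h hi).symm

lemma Cyl.mono {u u' : ℕ → List Bool} (h : ∀ j, u j <+: u' j) {N N' : ℕ} (hN : N ≤ N') :
    Cyl u' N' ⊆ Cyl u N := fun x hx j hj => Ext.mono (h j) (hx j (lt_of_lt_of_le hj hN))

lemma isOpen_agree (a : X0) (s : ℕ) : IsOpen {b : X0 | ∀ r, r < s → b r = a r} := by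
  have : {b : X0 | ∀ r, r < s → b r = a r} =
      ⋂ r ∈ Finset.range s, {b : X0 | b r = a r} := by
    ext b; simp
  rw [this]
  refine isOpen_biInter_finset fun r _ => ?_
  have : {b : X0 | b r = a r} = (fun b : X0 => b r) ⁻¹' {a r} := by ext b; simp
  rw [this]
  exact (isOpen_discrete {a r}).preimage (continuous_apply r)

lemma isOpen_cyl (u : ℕ → List Bool) (N : ℕ) : IsOpen (Cyl u N) := by
  have : Cyl u N = ⋂ j ∈ Finset.range N,
      ⋂ i ∈ Finset.range (u j).length, {x : XX | x j i = (u j).getD i false} := by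
    ext x
    simp only [Cyl, mem_setOf_eq, mem_iInter, Finset.mem_range]
    exact ⟨fun h j hj i hi => h j hj i hi, fun h j hj i hi => h j hj i hi⟩
  rw [this]
  refine isOpen_biInter_finset fun j _ => isOpen_biInter_finset fun i _ => ?_
  have : {x : XX | x j i = (u j).getD i false} =
      (fun x : XX => x j i) ⁻¹' {(u j).getD i false} := by ext x; simp
  rw [this]
  exact (isOpen_discrete _).preimage ((continuous_apply i).comp (continuous_apply j))

/-- Neighborhood basis in Cantor space. -/
lemma nhds_basis1 (x : X0) {U : Set X0} (hU : U ∈ nhds x) :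
    ∃ M, ∀ y : X0, (∀ i, i < M → y i = x i) → y ∈ U := by
  rw [nhds_pi, Filter.mem_pi] at hU
  obtain ⟨I, hIfin, t, ht, hsub⟩ := hU
  obtain ⟨M, hM⟩ := hIfin.bddAbove
  refine ⟨M + 1, fun y hy => hsub fun i hi => ?_⟩
  have : i < M + 1 := Nat.lt_succ_of_le (hM hi)
  rw [hy i this]
  have := ht i
  rwa [nhds_discrete, Filter.mem_pure] at this

lemma nhds_basis2 (x : XX) {U : Set XX} (hU : U ∈ nhds x) :
    ∃ M, ∀ y : XX, (∀ j, j < M → ∀ i, i < M → y j i = x j i) → y ∈ U := by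
  rw [nhds_pi, Filter.mem_pi] at hU
  obtain ⟨I, hIfin, t, ht, hsub⟩ := hU
  choose g hg using fun j => nhds_basis1 (x j) (ht j)
  obtain ⟨M0, hM0⟩ := (hIfin.image fun j => max (j + 1) (g j)).bddAbove
  refine ⟨M0 + 1, fun y hy => hsub fun j hj => ?_⟩
  have hb : max (j + 1) (g j) ≤ M0 := hM0 (mem_image_of_mem _ hj)
  have h1 : j + 1 ≤ M0 := le_trans (le_max_left (j+1) (g j)) hb
  have h2 : g j ≤ M0 := le_trans (le_max_right (j+1) (g j)) hb
  exact hg j _ fun i hi => hy j (by omega) i (by omega)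


lemma ext_prefix_ofFn {t : List Bool} {y : X0} (h : Ext t y) {L : ℕ} (hL : t.length ≤ L) :
    t <+: List.ofFn (fun i : Fin L => y i) := by
  rw [List.prefix_iff_eq_take]
  apply List.ext_getElem
  · simp [List.length_take, hL]
  · intro i h1 h2
    have hi : i < t.length := h1
    have hiL : i < L := lt_of_lt_of_le hi hL
    rw [List.getElem_take]
    rw [List.getElem_ofFn]
    rw [h i hi, List.getD_eq_getElem _ _ hi]

lemma density (F : Set XX) (hF : IsClosed F) (hI : interior F = ∅)
    (p : ℕ → List Bool) (K : ℕ) (hK : ∀ j, K ≤ j → p j = []) (N0 : ℕ) :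
    ∃ q : ℕ → List Bool, ∃ N, N0 ≤ N ∧ (∀ j, p j <+: q j) ∧ (∀ j, N ≤ j → q j = p j) ∧
      ∀ x ∈ Cyl q N, x ∉ F := by
  classical
  have hO : IsOpen (Cyl p K) := isOpen_cyl p K
  have hx0 : (fun j i => (p j).getD i false : XX) ∈ Cyl p K := by
    intro j _ i _; rfl
  have hne : (Cyl p K \ F).Nonempty := by
    by_contra h
    rw [not_nonempty_iff_eq_empty, diff_eq_empty] at h
    have : Cyl p K ⊆ interior F := interior_maximal h hO
    rw [hI] at this
    exact this hx0
  obtain ⟨x, hxO, hxF⟩ := hne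
  have hFc : Fᶜ ∈ nhds x := hF.isOpen_compl.mem_nhds hxF
  obtain ⟨M, hM⟩ := nhds_basis2 x hFc
  set N := max (max K M) N0 with hN
  refine ⟨fun j => if j < N then List.ofFn (fun i : Fin (max M (p j).length) => x j i) else p j,
    N, le_max_right _ _, ?_, ?_, ?_⟩
  · intro j
    by_cases hj : j < N
    · simp only [if_pos hj]
      by_cases hjK : j < K
      · exact ext_prefix_ofFn (hxO j hjK) (le_max_right _ _)
      · rw [hK j (le_of_not_gt hjK)]
        exact List.nil_prefix
    · simp [if_neg hj]
  · intro j hj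
    dsimp only
    rw [if_neg (not_lt_of_ge hj)]
  · intro y hy hyF
    refine hM y (fun j hjM i hiM => ?_) hyF
    have hjN : j < N := lt_of_lt_of_le hjM (le_trans (le_max_right K M) (le_max_left _ _))
    have := hy j hjN
    dsimp only at this
    rw [if_pos hjN] at this
    have hlen : i < (List.ofFn (fun i : Fin (max M (p j).length) => x j i)).length := by
      simp only [List.length_ofFn]; exact lt_max_of_lt_left hiM
    have := this i hlen
    rw [this, List.getD_eq_getElem _ _ hlen, List.getElem_ofFn]


/-- Patterns: a choice of (truncated) branch for each coordinate `j ≤ m`. -/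
abbrev Pat (m : ℕ) := Fin (m+1) → Fin (m+1) → Bool

noncomputable def aPi (m : ℕ) (π : Pat m) : ℕ → X0 := fun j i =>
  if h : j < m+1 ∧ i < m+1 then π ⟨j, h.1⟩ ⟨i, h.2⟩ else false

def Matches (m : ℕ) (π : Pat m) (a : ℕ → X0) : Prop :=
  ∀ j i, i < m + 1 - j → a j i = aPi m π j i

lemma fold (m : ℕ) (F : Set XX) (hF : IsClosed F) (hI : interior F = ∅) :
    ∀ (L : List (Pat m)) (U : ℕ → X0 → List Bool) (K : ℕ),
    (∀ j a b, (∀ i, i < m+1-j → a i = b i) → U j a = U j b) →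
    (∀ j, K ≤ j → ∀ a, U j a = []) → ∀ (N0 : ℕ),
    ∃ (U' : ℕ → X0 → List Bool) (K' N : ℕ),
      (∀ j a, U j a <+: U' j a) ∧
      (∀ j a b, (∀ i, i < m+1-j → a i = b i) → U' j a = U' j b) ∧
      (∀ j, K' ≤ j → ∀ a, U' j a = []) ∧ N0 ≤ N ∧
      (∀ π ∈ L, ∀ a : ℕ → X0, Matches m π a →
        ∀ x ∈ Cyl (fun j => U' j (a j)) N, x ∉ F) := by
  classical
  intro L
  induction L with
  | nil =>
    intro U K hloc hsupp N0
    exact ⟨U, K, N0, fun j a => List.prefix_refl _, hloc, hsupp, le_refl _,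
      fun π hπ => absurd hπ List.not_mem_nil⟩
  | cons π L ih =>
    intro U K hloc hsupp N0
    obtain ⟨q, Nq, hNq0, hqpre, hqeq, hqdisj⟩ :=
      density F hF hI (fun j => U j (aPi m π j)) K (fun j hj => hsupp j hj _) N0
    set U1 : ℕ → X0 → List Bool := fun j a =>
      if ∀ i, i < m+1-j → a i = aPi m π j i then q j else U j a with hU1
    have hcond : ∀ (j : ℕ) (a b : X0), (∀ i, i < m+1-j → a i = b i) →
        ((∀ i, i < m+1-j → a i = aPi m π j i) ↔ (∀ i, i < m+1-j → b i = aPi m π j i)) := by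
      intro j a b hab
      constructor
      · intro h i hi; rw [← hab i hi]; exact h i hi
      · intro h i hi; rw [hab i hi]; exact h i hi
    have hloc1 : ∀ j a b, (∀ i, i < m+1-j → a i = b i) → U1 j a = U1 j b := by
      intro j a b hab
      simp only [hU1]
      by_cases h : ∀ i, i < m+1-j → a i = aPi m π j i
      · rw [if_pos h, if_pos ((hcond j a b hab).mp h)]
      · rw [if_neg h, if_neg (fun h' => h (((hcond j a b hab)).mpr h')), hloc j a b hab]
    have hpre1 : ∀ j a, U j a <+: U1 j a := by
      intro j a
      simp only [hU1]
      by_cases h : ∀ i, i < m+1-j → a i = aPi m π j i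
      · rw [if_pos h, hloc j a (aPi m π j) h]
        exact hqpre j
      · rw [if_neg h]
    have hsupp1 : ∀ j, max K Nq ≤ j → ∀ a, U1 j a = [] := by
      intro j hj a
      simp only [hU1]
      by_cases h : ∀ i, i < m+1-j → a i = aPi m π j i
      · rw [if_pos h, hqeq j (le_trans (le_max_right _ _) hj), hsupp j (le_trans (le_max_left _ _) hj)]
      · rw [if_neg h, hsupp j (le_trans (le_max_left _ _) hj)]
    obtain ⟨U', K', N, hpre', hloc', hsupp', hN, hkill⟩ := ih U1 (max K Nq) hloc1 hsupp1 Nq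
    refine ⟨U', K', N, fun j a => (hpre1 j a).trans (hpre' j a), hloc', hsupp',
      le_trans hNq0 hN, ?_⟩
    intro π' hπ' a ha x hx
    rcases List.mem_cons.mp hπ' with h | h
    · subst h
      have hU1a : ∀ j, U1 j (a j) = q j := by
        intro j
        simp only [hU1]
        rw [if_pos (fun i hi => ha j i hi)]
      refine hqdisj x ?_
      have h1 : x ∈ Cyl (fun j => U1 j (a j)) Nq :=
        Cyl.mono (fun j => hpre' j (a j)) hN hx
      intro j hj
      rw [← hU1a j]
      exact h1 j hj
    · exact hkill π' h a ha x hx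

structure St (m : ℕ) where
  T : ℕ → X0 → List Bool
  loc : ∀ j a b, (∀ i, i < m - j → a i = b i) → T j a = T j b
  len : ∀ j a, m - j ≤ (T j a).length
  K : ℕ
  supp : ∀ j, K ≤ j → ∀ a, T j a = []

def St0 : St 0 where
  T := fun _ _ => []
  loc := fun _ _ _ _ => rfl
  len := fun j _ => by omega
  K := 0
  supp := fun _ _ _ => rfl

lemma step (m : ℕ) (F : Set XX) (hF : IsClosed F) (hI : interior F = ∅) (S : St m) :
    ∃ (S' : St (m+1)) (N : ℕ),
      (∀ j a, (S.T j a ++ if j < m+1 then [a (m - j)] else []) <+: S'.T j a) ∧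
      (∀ a : ℕ → X0, ∀ x ∈ Cyl (fun j => S'.T j (a j)) N, x ∉ F) := by
  classical
  set T1 : ℕ → X0 → List Bool := fun j a =>
    S.T j a ++ if j < m+1 then [a (m - j)] else [] with hT1
  have hloc1 : ∀ j a b, (∀ i, i < m+1-j → a i = b i) → T1 j a = T1 j b := by
    intro j a b hab
    simp only [hT1]
    rw [S.loc j a b (fun i hi => hab i (by omega))]
    by_cases hj : j < m+1
    · rw [if_pos hj, if_pos hj, hab (m-j) (by omega)]
    · rw [if_neg hj, if_neg hj]
  have hsupp1 : ∀ j, max S.K (m+1) ≤ j → ∀ a, T1 j a = [] := by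
    intro j hj a
    simp only [hT1]
    rw [S.supp j (le_trans (le_max_left _ _) hj), if_neg (by omega : ¬ j < m+1)]
    rfl
  obtain ⟨U', K', N, hpre', hloc', hsupp', _, hkill⟩ :=
    fold m F hF hI (Finset.univ : Finset (Pat m)).toList T1 (max S.K (m+1)) hloc1 hsupp1 0
  have hlen' : ∀ j a, m+1-j ≤ (U' j a).length := by
    intro j a
    have h1 := (hpre' j a).length_le
    have h2 := S.len j a
    simp only [hT1, List.length_append] at h1
    by_cases hj : j < m+1
    · rw [if_pos hj] at h1
      simp at h1
      omega
    · omega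
  refine ⟨⟨U', hloc', hlen', K', hsupp'⟩, N, hpre', ?_⟩
  intro a x hx
  set π : Pat m := fun j i => a j i with hπ
  have hmatch : Matches m π a := by
    intro j i hi
    have hj : j < m+1 := by omega
    have hi' : i < m+1 := by omega
    simp only [aPi, hπ]
    rw [dif_pos ⟨hj, hi'⟩]
  exact hkill π (Finset.mem_toList.mpr (Finset.mem_univ π)) a hmatch x hx


noncomputable def nextSt (m : ℕ) (F : Set XX) (hF : IsClosed F) (hI : interior F = ∅)
    (S : St m) :
    {p : St (m+1) × ℕ //
      (∀ j a, (S.T j a ++ if j < m+1 then [a (m - j)] else []) <+: p.1.T j a) ∧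
      (∀ a : ℕ → X0, ∀ x ∈ Cyl (fun j => p.1.T j (a j)) p.2, x ∉ F)} := by
  have h := step m F hF hI S
  exact ⟨⟨h.choose, h.choose_spec.choose⟩, h.choose_spec.choose_spec⟩

section chain

variable (G : ℕ → Set XX) (hG : ∀ n, IsClosed (G n) ∧ interior (G n) = ∅)

noncomputable def stages : (m : ℕ) → St m
  | 0 => St0
  | (m+1) => (nextSt m (G m) (hG m).1 (hG m).2 (stages m)).1.1

noncomputable def NN (m : ℕ) : ℕ :=
  (nextSt m (G m) (hG m).1 (hG m).2 (stages G hG m)).1.2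

lemma stage_ext (m : ℕ) : ∀ j a,
    ((stages G hG m).T j a ++ if j < m+1 then [a (m - j)] else []) <+:
      (stages G hG (m+1)).T j a :=
  (nextSt m (G m) (hG m).1 (hG m).2 (stages G hG m)).2.1

lemma stage_avoid (m : ℕ) : ∀ a : ℕ → X0,
    ∀ x ∈ Cyl (fun j => (stages G hG (m+1)).T j (a j)) (NN G hG m), x ∉ G m :=
  (nextSt m (G m) (hG m).1 (hG m).2 (stages G hG m)).2.2

lemma stage_mono {m m' : ℕ} (h : m ≤ m') (j : ℕ) (a : X0) :
    (stages G hG m).T j a <+: (stages G hG m').T j a := by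
  induction m', h using Nat.le_induction with
  | base => exact List.prefix_refl _
  | succ m' hm ih =>
    exact ih.trans ((List.prefix_append _ _).trans (stage_ext G hG m' j a))

lemma prefix_getD {t t' : List Bool} (h : t <+: t') {i : ℕ} (hi : i < t.length) :
    t.getD i false = t'.getD i false := by
  rw [List.getD_eq_getElem _ _ hi,
    List.getD_eq_getElem _ _ (lt_of_lt_of_le hi h.length_le)]
  exact List.IsPrefix.getElem h hi

noncomputable def lim (j : ℕ) (a : X0) : X0 := fun i =>
  ((stages G hG (j+i+1)).T j a).getD i false

lemma lim_ext (m j : ℕ) (a : X0) : Ext ((stages G hG m).T j a) (lim G hG j a) := by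
  intro i hi
  show ((stages G hG (j+i+1)).T j a).getD i false = _
  rcases le_total m (j+i+1) with h | h
  · exact (prefix_getD (stage_mono G hG h j a) hi).symm
  · have hi' : i < ((stages G hG (j+i+1)).T j a).length := by
      have := (stages G hG (j+i+1)).len j a
      omega
    exact prefix_getD (stage_mono G hG h j a) hi'

lemma lim_loc (j i : ℕ) (a b : X0) (hab : ∀ r, r < i+1 → a r = b r) :
    lim G hG j a i = lim G hG j b i := by
  show ((stages G hG (j+i+1)).T j a).getD i false = ((stages G hG (j+i+1)).T j b).getD i false
  rw [(stages G hG (j+i+1)).loc j a b (fun r hr => hab r (by omega))]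

lemma cont_of_local {g : X0 → Bool} (s : ℕ)
    (h : ∀ a b, (∀ r, r < s → a r = b r) → g a = g b) : Continuous g := by
  rw [continuous_iff_continuousAt]
  intro a
  apply tendsto_nhds_of_eventually_eq
  exact Filter.mem_of_superset ((isOpen_agree a s).mem_nhds (fun r _ => rfl))
    (fun b hb => h b a hb)

lemma lim_cont (j : ℕ) : Continuous (lim G hG j) := by
  refine continuous_pi fun i => cont_of_local (i+1) ?_
  intro a b hab
  exact lim_loc G hG j i a b hab

lemma getD_concat (t : List Bool) (b : Bool) : (t ++ [b]).getD t.length false = b := by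
  rw [List.getD_eq_getElem _ _ (by simp)]
  simp

lemma lim_bit (m j : ℕ) (hj : j ≤ m) (a : X0) :
    lim G hG j a ((stages G hG m).T j a).length = a (m - j) := by
  set L := ((stages G hG m).T j a).length
  have h1 := stage_ext G hG m j a
  rw [if_pos (by omega : j < m+1)] at h1
  have h2 : L < ((stages G hG (m+1)).T j a).length := by
    have := h1.length_le
    simp only [List.length_append, List.length_singleton] at this
    omega
  have h3 := lim_ext G hG (m+1) j a L h2
  rw [h3, ← prefix_getD h1 (by simp [L])]
  exact getD_concat _ _

lemma perfect_range_lim (j : ℕ) : Perfect (Set.range (lim G hG j)) ∧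
    (Set.range (lim G hG j)).Nonempty := by
  refine ⟨⟨(isCompact_range (lim_cont G hG j)).isClosed, ?_⟩, ⟨_, ⟨fun _ => false, rfl⟩⟩⟩
  rintro x ⟨a, rfl⟩
  rw [accPt_iff_nhds]
  intro U hU
  obtain ⟨M, hM⟩ := nhds_basis1 _ hU
  set m := j + M with hm
  set a' : X0 := fun r => if r = M then !(a r) else a r with ha'
  have hloc : ∀ r, r < m - j → a r = a' r := by
    intro r hr
    rw [ha']
    dsimp only
    rw [if_neg (by omega)]
  have hTeq : (stages G hG m).T j a = (stages G hG m).T j a' :=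
    (stages G hG m).loc j a a' hloc
  have hlen : M ≤ ((stages G hG m).T j a).length := by
    have := (stages G hG m).len j a
    omega
  have hagree : ∀ i, i < ((stages G hG m).T j a).length →
      lim G hG j a' i = lim G hG j a i := by
    intro i hi
    rw [lim_ext G hG m j a i hi]
    rw [lim_ext G hG m j a' i (hTeq ▸ hi)]
    rw [hTeq]
  refine ⟨lim G hG j a', ⟨hM _ (fun i hi => hagree i (lt_of_lt_of_le hi hlen)),
    ⟨a', rfl⟩⟩, ?_⟩
  intro heq
  have hb1 := lim_bit G hG m j (by omega) a
  have hb2 := lim_bit G hG m j (by omega) a'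
  rw [← hTeq] at hb2
  have hfin : a' (m - j) = a (m - j) := by rw [← hb1, ← hb2, heq]
  have hMm : m - j = M := by omega
  rw [hMm, ha'] at hfin
  simp at hfin

end chain

theorem mycielski_seq (R : Set XX) (hR : IsMeagre R) :
    ∃ C : ℕ → Set X0, (∀ n, Perfect (C n) ∧ (C n).Nonempty) ∧
      ∀ x : XX, (∀ n, x n ∈ C n) → x ∉ R := by
  obtain ⟨S, hSnd, hScnt, hSsub⟩ := isMeagre_iff_countable_union_isNowhereDense.mp hR
  set S' : Set (Set XX) := insert ∅ (closure '' S) with hS'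
  have hS'cnt : S'.Countable := (hScnt.image _).insert _
  obtain ⟨g, hg⟩ := hS'cnt.exists_eq_range ⟨∅, mem_insert _ _⟩
  have hGprop : ∀ n, IsClosed (g n) ∧ interior (g n) = ∅ := by
    intro n
    have : g n ∈ S' := hg ▸ mem_range_self n
    rcases this with h | ⟨s, hs, h⟩
    · rw [h]; exact ⟨isClosed_empty, interior_empty⟩
    · rw [← h]
      exact ⟨isClosed_closure, hSnd s hs⟩
  refine ⟨fun j => Set.range (lim g hGprop j), fun j => perfect_range_lim g hGprop j, ?_⟩
  intro x hx hxR
  choose a ha using hx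
  obtain ⟨s, hs, hxs⟩ := hSsub hxR
  have : closure s ∈ S' := mem_insert_iff.mpr (Or.inr (mem_image_of_mem _ hs))
  rw [hg] at this
  obtain ⟨n, hn⟩ := this
  refine stage_avoid g hGprop n a x ?_ ?_
  · intro j hj
    rw [← ha j]
    exact lim_ext g hGprop (n+1) j (a j)
  · rw [hn]
    exact subset_closure hxs


lemma isMeagre_preimage_homeo {A B : Type*} [TopologicalSpace A] [TopologicalSpace B]
    (h : A ≃ₜ B) {s : Set B} (hs : IsMeagre s) : IsMeagre (h ⁻¹' s) := by
  rw [isMeagre_iff_countable_union_isNowhereDense] at hs ⊢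
  obtain ⟨S, hnd, hcnt, hsub⟩ := hs
  refine ⟨(fun t => h ⁻¹' t) '' S, ?_, hcnt.image _, ?_⟩
  · rintro t' ⟨t, ht, rfl⟩
    have hnd' := hnd t ht
    rw [IsNowhereDense] at hnd' ⊢
    rw [← h.preimage_closure, ← h.preimage_interior, hnd', preimage_empty]
  · intro x hx
    obtain ⟨t, ht, hxt⟩ := hsub hx
    exact ⟨h ⁻¹' t, mem_image_of_mem _ ht, hxt⟩

noncomputable def phi (k : ℕ) (e : Fin k × ℕ ≃ ℕ) : XX ≃ₜ (Fin k → ℕ → X0) :=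
  { toFun := fun y i n => y (e (i, n)),
    invFun := fun x j => x (e.symm j).1 (e.symm j).2,
    left_inv := fun y => funext fun j => by simp,
    right_inv := fun x => funext fun i => funext fun n => by simp,
    continuous_toFun := continuous_pi fun i => continuous_pi fun n => continuous_apply _,
    continuous_invFun := by
      exact continuous_pi fun j =>
        (continuous_apply ((e.symm j).2)).comp (continuous_apply ((e.symm j).1)) }

end PolMyc

/-- Polarized Mycielski theorem for meager `k`-ary relations on `(2^ω)^ω`: if `R` is a
meager `k`-ary relation, there are, for each `i < k`, sequences of perfect subsets of
Cantor space such that no `k`-tuple from the corresponding products is `R`-related. -/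
theorem polarized_mycielski_relation (k : ℕ) (R : Set (Fin k → ℕ → ℕ → Bool))
    (hR : IsMeagre R) :
    ∃ C : Fin k → ℕ → Set (ℕ → Bool),
      (∀ i n, Perfect (C i n) ∧ (C i n).Nonempty) ∧
      ∀ x : Fin k → ℕ → ℕ → Bool, (∀ i n, x i n ∈ C i n) → x ∉ R := by
  open PolMyc in
  cases k with
  | zero =>
    refine ⟨fun i => i.elim0, fun i => i.elim0, ?_⟩
    intro x _ hxR
    rw [IsMeagre, mem_residual_iff] at hR
    obtain ⟨Sets, hopen, hdense, hcnt, hsub⟩ := hR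
    have hx : x ∈ ⋂₀ Sets := by
      intro t ht
      obtain ⟨y, hy⟩ := (hdense t ht).nonempty
      have : x = y := funext fun i => i.elim0
      rwa [this]
    exact hsub hx hxR
  | succ k' =>
    haveI : Infinite (Fin (k'+1) × ℕ) :=
      Infinite.of_injective (fun n => ((0 : Fin (k'+1)), n))
        (fun a b h => by simpa using h)
    haveI := Denumerable.ofEncodableOfInfinite (Fin (k'+1) × ℕ)
    set e : Fin (k'+1) × ℕ ≃ ℕ := Denumerable.eqv (Fin (k'+1) × ℕ) with he
    set Φ := phi (k'+1) e with hΦ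
    have hR' : IsMeagre (Φ ⁻¹' R) := isMeagre_preimage_homeo Φ hR
    obtain ⟨D, hD, havoid⟩ := mycielski_seq _ hR'
    refine ⟨fun i n => D (e (i, n)), fun i n => hD _, ?_⟩
    intro x hx hxR
    have hy : ∀ j, (Φ.symm x) j ∈ D j := by
      intro j
      have h1 := hx (e.symm j).1 (e.symm j).2
      have h2 : e ((e.symm j).1, (e.symm j).2) = j := by simp
      have h3 : (Φ.symm x) j = x (e.symm j).1 (e.symm j).2 := by exact rfl
      dsimp only at h1
      rw [h2] at h1
      rw [h3]
      exact h1
    refine havoid _ hy ?_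
    show Φ (Φ.symm x) ∈ R
    rw [Φ.apply_symm_apply]
    exact hxR
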